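/- Let G = (V,E), let A ⊂ V, and let f be a preflow routing supply with source function Δ(v) = ⌈1/σ⌉·deg(v) for v ∈ A and Δ(v) = 0 otherwise, sink function T(v) = deg(v) for v ∉ A and 0 for v ∈ A, and congestion cong(f). Then for any (A,σ)-overlapping cut S′ (i.e. vol(S′ ∩ A)/vol(S′) ≥ σ) with vol(S′) > 2·|ex_f|/σ, the conductance satisfies φ(S′) ≥ σ/(2·cong(f)), assuming vol(S′) ≤ vol(V − S′). -/

import Mathlib

variable {V : Type*}

noncomputable def gdeg (G : SimpleGraph V) (v : V) : ℕ := (G.neighborSet v).ncard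

noncomputable def gvol (G : SimpleGraph V) (S : Set V) : ℕ := ∑ᶠ v ∈ S, gdeg G v

noncomputable def gcut (G : SimpleGraph V) (S : Set V) : ℕ :=
  {e ∈ G.edgeSet | ∃ u ∈ S, ∃ v ∈ Sᶜ, e = s(u, v)}.ncard

private lemma sum_antisymm_diag {V : Type*} [DecidableEq V] (t : Finset V) (f : V → V → ℤ)
    (hanti : ∀ u v, f u v = - f v u) :
    ∑ v ∈ t, ∑ u ∈ t, f u v = 0 := by
  have h0 : ∑ v ∈ t, ∑ u ∈ t, (f u v + f v u) = 0 := by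
    apply Finset.sum_eq_zero; intro v _
    apply Finset.sum_eq_zero; intro u _
    rw [hanti u v]; ring
  have h1 : ∑ v ∈ t, ∑ u ∈ t, (f u v + f v u)
      = (∑ v ∈ t, ∑ u ∈ t, f u v) + (∑ v ∈ t, ∑ u ∈ t, f v u) := by
    simp [Finset.sum_add_distrib]
  have h2 : ∑ v ∈ t, ∑ u ∈ t, f v u = ∑ v ∈ t, ∑ u ∈ t, f u v :=
    Finset.sum_comm
  rw [h1, h2] at h0
  linarith

set_option maxHeartbeats 1000000 in
theorem overlapping_cut_conductance [Fintype V] (G : SimpleGraph V)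
    (A : Set V) (σ : ℝ) (hσ0 : 0 < σ) (hσ1 : σ ≤ 1)
    (f : V → V → ℤ)
    (hanti : ∀ u v : V, f u v = - f v u)
    (hsupp : ∀ u v : V, ¬ G.Adj u v → f u v = 0)
    (C : ℝ) (hC : ∀ u v : V, (f u v : ℝ) ≤ C)
    (Δ T : V → ℤ)
    (hΔA : ∀ v ∈ A, Δ v = ⌈1 / σ⌉ * (gdeg G v : ℤ))
    (hΔA' : ∀ v ∉ A, Δ v = 0)
    (hTA : ∀ v ∈ A, T v = 0)
    (hTA' : ∀ v ∉ A, T v = (gdeg G v : ℤ))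
    (ex : V → ℤ)
    (hex : ∀ v : V, ex v = max ((Δ v + ∑ u : V, f u v) - T v) 0)
    (S' : Set V)
    (hside : gvol G S' ≤ gvol G S'ᶜ)
    (hoverlap : σ * (gvol G S' : ℝ) ≤ (gvol G (S' ∩ A) : ℝ))
    (hbig : 2 * (∑ v : V, (ex v : ℝ)) / σ < (gvol G S' : ℝ)) :
    σ / (2 * C) ≤ (gcut G S' : ℝ) / (gvol G S' : ℝ) := by
  classical
  set s : Finset V := S'.toFinset with hsdef
  have hscoe : (s : Set V) = S' := Set.coe_toFinset S'
  have hmem : ∀ v : V, v ∈ s ↔ v ∈ S' := fun v => Set.mem_toFinset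
  -- volume identities
  have hvolS : gvol G S' = ∑ v ∈ s, gdeg G v := by
    rw [gvol, ← hscoe, finsum_mem_coe_finset]
  have hvolSA : gvol G (S' ∩ A) = ∑ v ∈ s.filter (· ∈ A), gdeg G v := by
    rw [gvol, ← finsum_mem_coe_finset]
    congr 1
    ext v
    simp only [Finset.coe_filter, Set.mem_setOf_eq, Set.mem_inter_iff, hmem]
  -- excess nonneg
  have hex0 : ∀ v : V, 0 ≤ ex v := by
    intro v; rw [hex v]; exact le_max_right _ _
  -- per-vertex inequality
  have hpv : ∀ v : V, Δ v + (∑ u : V, f u v) - T v ≤ ex v := by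
    intro v; rw [hex v]; exact le_max_left _ _
  -- diagonal cancellation & cut reshaping
  have hdiag : ∑ v ∈ s, ∑ u ∈ s, f u v = 0 := sum_antisymm_diag s f hanti
  set F : ℤ := ∑ u ∈ s, ∑ v ∈ sᶜ, f u v with hFdef
  have hcross : ∑ v ∈ s, ∑ u ∈ sᶜ, f u v = -F := by
    rw [hFdef]
    rw [← Finset.sum_neg_distrib]
    apply Finset.sum_congr rfl
    intro v _
    rw [← Finset.sum_neg_distrib]
    apply Finset.sum_congr rfl
    intro u _
    rw [hanti u v]
  have hsplit : ∀ v : V, ∑ u : V, f u v = ∑ u ∈ s, f u v + ∑ u ∈ sᶜ, f u v := by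
    intro v; rw [Finset.sum_add_sum_compl]
  -- summed inequality
  have hsum : (∑ v ∈ s, Δ v) + (-F) ≤ (∑ v ∈ s, T v) + ∑ v ∈ s, ex v := by
    have h := Finset.sum_le_sum (fun v (_ : v ∈ s) => hpv v)
    have e1 : ∑ v ∈ s, (Δ v + (∑ u : V, f u v) - T v)
        = (∑ v ∈ s, Δ v) + (-F) - ∑ v ∈ s, T v := by
      have : ∀ v ∈ s, Δ v + (∑ u : V, f u v) - T v
          = Δ v + (∑ u ∈ s, f u v + ∑ u ∈ sᶜ, f u v) - T v := by
        intro v _; rw [hsplit v]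
      rw [Finset.sum_congr rfl this]
      rw [Finset.sum_sub_distrib, Finset.sum_add_distrib, Finset.sum_add_distrib,
        hdiag, hcross]
      ring
    rw [e1] at h
    linarith
  -- source sum
  have hΔsum : ∑ v ∈ s, Δ v = ⌈1 / σ⌉ * (gvol G (S' ∩ A) : ℤ) := by
    rw [← Finset.sum_filter_add_sum_filter_not s (· ∈ A)]
    have h1 : ∑ v ∈ s.filter (· ∈ A), Δ v
        = ∑ v ∈ s.filter (· ∈ A), ⌈1 / σ⌉ * (gdeg G v : ℤ) := by
      apply Finset.sum_congr rfl
      intro v hv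
      exact hΔA v (Finset.mem_filter.mp hv).2
    have h2 : ∑ v ∈ s.filter (¬ · ∈ A), Δ v = 0 := by
      apply Finset.sum_eq_zero
      intro v hv
      exact hΔA' v (Finset.mem_filter.mp hv).2
    rw [h1, h2, ← Finset.mul_sum, hvolSA]
    push_cast
    ring
  -- sink sum
  have hTsum : ∑ v ∈ s, T v = (gvol G S' : ℤ) - (gvol G (S' ∩ A) : ℤ) := by
    rw [← Finset.sum_filter_add_sum_filter_not s (· ∈ A)]
    have h1 : ∑ v ∈ s.filter (· ∈ A), T v = 0 := by
      apply Finset.sum_eq_zero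
      intro v hv
      exact hTA v (Finset.mem_filter.mp hv).2
    have h2 : ∑ v ∈ s.filter (¬ · ∈ A), T v
        = ∑ v ∈ s.filter (¬ · ∈ A), (gdeg G v : ℤ) := by
      apply Finset.sum_congr rfl
      intro v hv
      exact hTA' v (Finset.mem_filter.mp hv).2
    have h3 : (gvol G S' : ℤ) = (gvol G (S' ∩ A) : ℤ)
        + ∑ v ∈ s.filter (¬ · ∈ A), (gdeg G v : ℤ) := by
      have h4 := Finset.sum_filter_add_sum_filter_not s (· ∈ A) (fun v => (gdeg G v : ℤ))
      rw [hvolS, hvolSA]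
      push_cast at h4 ⊢
      linarith
    rw [h1, h2]
    linarith [h3]
  -- excess sum bound
  have hexsum : ∑ v ∈ s, ex v ≤ ∑ v : V, ex v := by
    apply Finset.sum_le_sum_of_subset_of_nonneg (Finset.subset_univ s)
    intro v _ _; exact hex0 v
  -- the cut pairs
  set P : Finset (V × V) := (s ×ˢ sᶜ).filter (fun p => G.Adj p.1 p.2) with hPdef
  -- flow bounded by congestion times cut pairs
  have hFle : (F : ℝ) ≤ C * P.card := by
    have hFP : F = ∑ p ∈ P, f p.1 p.2 := by
      rw [hFdef, ← Finset.sum_product']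
      symm
      apply Finset.sum_subset (Finset.filter_subset _ _)
      intro p hp hnp
      simp only [Finset.mem_filter] at hnp
      exact hsupp p.1 p.2 (fun h => hnp ⟨hp, h⟩)
    rw [hFP]
    push_cast
    calc ∑ p ∈ P, (f p.1 p.2 : ℝ) ≤ ∑ p ∈ P, C :=
          Finset.sum_le_sum (fun p _ => hC p.1 p.2)
      _ = C * P.card := by rw [Finset.sum_const]; ring
  -- cut cardinality
  have hcut : gcut G S' = P.card := by
    have himg : {e ∈ G.edgeSet | ∃ u ∈ S', ∃ v ∈ S'ᶜ, e = s(u, v)}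
        = ↑(P.image (fun p => s(p.1, p.2))) := by
      ext e
      simp only [Set.mem_setOf_eq, Finset.coe_image, Set.mem_image, Finset.mem_coe,
        hPdef, Finset.mem_filter, Finset.mem_product, Finset.mem_compl]
      constructor
      · rintro ⟨he, u, hu, v, hv, rfl⟩
        refine ⟨(u, v), ⟨⟨?_, ?_⟩, ?_⟩, rfl⟩
        · exact (hmem u).mpr hu
        · intro h; exact hv ((hmem v).mp h)
        · exact G.mem_edgeSet.mp he
      · rintro ⟨⟨u, v⟩, ⟨⟨hu, hv⟩, hadj⟩, rfl⟩
        exact ⟨G.mem_edgeSet.mpr hadj, u, (hmem u).mp hu, v,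
          fun h => hv ((hmem v).mpr h), rfl⟩
    rw [gcut, himg, Set.ncard_coe_finset]
    apply Finset.card_image_of_injOn
    intro p hp q hq heq
    simp only [hPdef, Finset.mem_coe, Finset.mem_filter, Finset.mem_product,
      Finset.mem_compl] at hp hq
    obtain ⟨⟨hp1, hp2⟩, hpa⟩ := hp
    obtain ⟨⟨hq1, hq2⟩, hqa⟩ := hq
    rcases Sym2.eq_iff.mp heq with ⟨h1, h2⟩ | ⟨h1, h2⟩
    · exact Prod.ext h1 h2
    · exact absurd (h1 ▸ hp1) hq2
  -- assemble real arithmetic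
  set vS : ℝ := (gvol G S' : ℝ) with hvSdef
  set vA : ℝ := (gvol G (S' ∩ A) : ℝ) with hvAdef
  set tex : ℝ := ∑ v : V, (ex v : ℝ) with htexdef
  have htex0 : 0 ≤ tex := by
    apply Finset.sum_nonneg
    intro v _
    exact_mod_cast hex0 v
  have hvS0 : 0 < vS := lt_of_le_of_lt (by positivity) hbig
  have hvA0 : 0 ≤ vA := by positivity
  have hr : 1 / σ ≤ (⌈1 / σ⌉ : ℝ) := Int.le_ceil _
  -- F ≥ ⌈1/σ⌉ vA − (vS − vA) − tex  (real cast)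
  have hFZ : ((⌈1 / σ⌉ : ℝ) * vA) - (vS - vA) - tex ≤ (F : ℝ) := by
    have hZ : ⌈1 / σ⌉ * (gvol G (S' ∩ A) : ℤ) - ((gvol G S' : ℤ) - (gvol G (S' ∩ A) : ℤ))
        - (∑ v : V, ex v) ≤ F := by
      have := hsum
      rw [hΔsum, hTsum] at this
      linarith [hexsum]
    have hZR : ((⌈1 / σ⌉ * (gvol G (S' ∩ A) : ℤ) - ((gvol G S' : ℤ)
        - (gvol G (S' ∩ A) : ℤ)) - (∑ v : V, ex v) : ℤ) : ℝ) ≤ (F : ℝ) := by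
      exact_mod_cast hZ
    push_cast at hZR
    rw [hvSdef, hvAdef, htexdef]
    push_cast
    linarith
  have hσvA : (1 / σ) * (σ * vS) ≤ (1 / σ) * vA :=
    mul_le_mul_of_nonneg_left hoverlap (by positivity)
  have hσvA' : (1 / σ) * (σ * vS) = vS := by field_simp
  have hrvA : (1 / σ) * vA ≤ (⌈1 / σ⌉ : ℝ) * vA :=
    mul_le_mul_of_nonneg_right hr hvA0
  have htexlt : 2 * tex < σ * vS := by
    rw [div_lt_iff₀ hσ0] at hbig
    nlinarith
  have hmain : σ * vS / 2 ≤ C * P.card := by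
    have hvAσ : σ * vS ≤ vA := hoverlap
    nlinarith [hFle, hFZ]
  have hCN : 0 < C * P.card := by nlinarith
  have hN0 : (0 : ℝ) ≤ (P.card : ℝ) := Nat.cast_nonneg _
  have hC0 : 0 < C := by
    by_contra h
    push_neg at h
    nlinarith
  have hNpos : 0 < (P.card : ℝ) := by
    rcases lt_or_eq_of_le hN0 with h | h
    · exact h
    · exfalso; rw [← h] at hCN; simp at hCN
  rw [div_le_div_iff₀ (by linarith) hvS0, hcut]
  push_cast
  nlinarith
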